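/- For an (α, δ)-expander code with δ > 1/2 and left degree d_v, every fractional pseudocodeword x (vertex of the relaxed polytope with at least one fractional coordinate) satisfies |V_frac(x)| ≥ αn, i.e., the set of fractional coordinates has size at least αn. -/

import Mathlib

/-- For an `(α, δ)`-expander code with `δ > 1/2` and left degree `dv`, every fractional
pseudocodeword `x` (vertex of the relaxed polytope with at least one fractional
coordinate) has fractional support of size at least `αn`. -/
theorem stmt13 (n m dv dc : ℕ)
    (Nv : Fin n → Finset (Fin m)) (hdv : ∀ i, (Nv i).card = dv)
    (Nb : Fin m → Finset (Fin n)) (hdc : ∀ j, (Nb j).card = dc)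
    (hadj : ∀ i j, j ∈ Nv i ↔ i ∈ Nb j)
    (α δ : ℝ) (hα : 0 < α) (hδ : 1 / 2 < δ) (hδ1 : δ ≤ 1)
    (hexp : ∀ S : Finset (Fin n), (S.card : ℝ) ≤ α * n →
      δ * dv * S.card ≤ ((S.biUnion Nv).card : ℝ))
    (P : Set (Fin n → ℝ))
    (hP : P = {x | (∀ i, 0 ≤ x i ∧ x i ≤ 1) ∧
      ∀ j, ∀ S ⊆ Nb j, Odd S.card →
        1 ≤ ∑ i ∈ Nb j \ S, x i + ∑ i ∈ S, (1 - x i)})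
    (x : Fin n → ℝ) (hx : x ∈ Set.extremePoints ℝ P)
    (hfrac : ∃ i, 0 < x i ∧ x i < 1) :
    α * n ≤ ({i : Fin n | 0 < x i ∧ x i < 1}.ncard : ℝ) := by
  classical
  obtain ⟨i₀, hi₀⟩ := hfrac
  -- membership facts
  have hxP : x ∈ P := hx.1
  rw [hP] at hxP
  obtain ⟨hbox, hcons⟩ := hxP
  set F : Finset (Fin n) := Finset.univ.filter (fun i => 0 < x i ∧ x i < 1) with hF
  have hsetF : {i : Fin n | 0 < x i ∧ x i < 1} = ↑F := by
    ext i; simp [hF]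
  rw [hsetF, Set.ncard_coe_finset]
  by_contra hcon
  push_neg at hcon
  -- case dv = 0 : perturbation argument
  rcases Nat.eq_zero_or_pos dv with hdv0 | hdvpos
  · -- i₀ has no neighbors, perturb
    have hnoNb : ∀ j, i₀ ∉ Nb j := by
      intro j hj
      have : j ∈ Nv i₀ := (hadj i₀ j).mpr hj
      have := hdv i₀
      rw [hdv0] at this
      rw [Finset.card_eq_zero] at this
      simp [this] at ‹j ∈ Nv i₀›
    set ε : ℝ := min (x i₀) (1 - x i₀) with hε
    have hεpos : 0 < ε := lt_min hi₀.1 (by linarith [hi₀.2])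
    set x₁ : Fin n → ℝ := Function.update x i₀ (x i₀ - ε) with hx₁
    set x₂ : Fin n → ℝ := Function.update x i₀ (x i₀ + ε) with hx₂
    have hmem : ∀ y : Fin n → ℝ, (∀ i, 0 ≤ y i ∧ y i ≤ 1) →
        (∀ i, i ≠ i₀ → y i = x i) → y ∈ P := by
      intro y hybox hyeq
      rw [hP]
      refine ⟨hybox, ?_⟩
      intro j S hS hodd
      have h1 : ∑ i ∈ Nb j \ S, y i = ∑ i ∈ Nb j \ S, x i := by
        refine Finset.sum_congr rfl fun i hi => ?_
        exact hyeq i fun h => hnoNb j (h ▸ (Finset.mem_sdiff.mp hi).1)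
      have h2 : ∑ i ∈ S, (1 - y i) = ∑ i ∈ S, (1 - x i) := by
        refine Finset.sum_congr rfl fun i hi => ?_
        rw [hyeq i fun h => hnoNb j (h ▸ hS hi)]
      rw [h1, h2]
      exact hcons j S hS hodd
    have hx₁P : x₁ ∈ P := by
      refine hmem x₁ ?_ ?_
      · intro i
        by_cases h : i = i₀
        · subst h
          simp only [hx₁, Function.update_self]
          constructor
          · have := min_le_left (x i) (1 - x i); linarith [hεpos, this]
          · linarith [hi₀.2, hεpos]
        · simp only [hx₁, Function.update_of_ne h]; exact hbox i
      · intro i h; simp [hx₁, Function.update_of_ne h]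
    have hx₂P : x₂ ∈ P := by
      refine hmem x₂ ?_ ?_
      · intro i
        by_cases h : i = i₀
        · subst h
          simp only [hx₂, Function.update_self]
          constructor
          · linarith [hi₀.1, hεpos]
          · have := min_le_right (x i) (1 - x i); linarith
        · simp only [hx₂, Function.update_of_ne h]; exact hbox i
      · intro i h; simp [hx₂, Function.update_of_ne h]
    have hseg : x ∈ openSegment ℝ x₁ x₂ := by
      refine ⟨1/2, 1/2, by norm_num, by norm_num, by norm_num, ?_⟩
      funext i
      by_cases h : i = i₀
      · subst h
        simp only [hx₁, hx₂, Pi.add_apply, Pi.smul_apply, Function.update_self,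
          smul_eq_mul]
        ring
      · simp only [hx₁, hx₂, Pi.add_apply, Pi.smul_apply, Function.update_of_ne h,
          smul_eq_mul]
        ring
    have := hx.2 hx₁P hx₂P hseg
    have : x₁ i₀ = x i₀ := by rw [this]
    simp only [hx₁, Function.update_self] at this
    linarith
  -- case dv ≥ 1 : counting argument
  · have hkey : ∀ j : Fin m, (Nb j ∩ F).card ≠ 1 := by
      intro j h1
      obtain ⟨a, ha⟩ := Finset.card_eq_one.mp h1
      have hamem : a ∈ Nb j ∩ F := ha ▸ Finset.mem_singleton_self a
      have hab : a ∈ Nb j := (Finset.mem_inter.mp hamem).1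
      have haf : 0 < x a ∧ x a < 1 := by
        have := (Finset.mem_inter.mp hamem).2
        simpa [hF] using this
      have hzero : ∀ i ∈ Nb j, i ≠ a → x i = 0 ∨ x i = 1 := by
        intro i hi hne
        rcases eq_or_lt_of_le (hbox i).1 with heq | hlt
        · exact Or.inl heq.symm
        rcases eq_or_lt_of_le (hbox i).2 with heq | hlt2
        · exact Or.inr heq
        exfalso; apply hne
        have : i ∈ Nb j ∩ F := Finset.mem_inter.mpr ⟨hi, by simp [hF, hlt, hlt2]⟩
        rw [ha] at this
        exact Finset.mem_singleton.mp this
      set T : Finset (Fin n) := (Nb j).filter (fun i => x i = 1) with hT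
      have hTsub : T ⊆ Nb j := Finset.filter_subset _ _
      have haT : a ∉ T := by
        simp only [hT, Finset.mem_filter]
        rintro ⟨-, h⟩
        linarith [haf.2]
      rcases Nat.even_or_odd T.card with hev | hod
      · -- use S = insert a T
        have hSsub : insert a T ⊆ Nb j := Finset.insert_subset hab hTsub
        have hSodd : Odd (insert a T).card := by
          rw [Finset.card_insert_of_notMem haT]
          exact Even.add_one hev
        have hc := hcons j (insert a T) hSsub hSodd
        have h1 : ∑ i ∈ Nb j \ insert a T, x i = 0 := by
          refine Finset.sum_eq_zero fun i hi => ?_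
          obtain ⟨hib, hiS⟩ := Finset.mem_sdiff.mp hi
          simp only [Finset.mem_insert, not_or] at hiS
          rcases hzero i hib hiS.1 with h | h
          · exact h
          · exact absurd (Finset.mem_filter.mpr ⟨hib, h⟩) hiS.2
        have h2 : ∑ i ∈ insert a T, (1 - x i) = 1 - x a := by
          rw [Finset.sum_insert haT]
          have : ∑ i ∈ T, (1 - x i) = 0 := by
            refine Finset.sum_eq_zero fun i hi => ?_
            have := (Finset.mem_filter.mp hi).2
            linarith
          rw [this]; ring
        rw [h1, h2] at hc
        linarith [haf.1]
      · -- use S = T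
        have hc := hcons j T hTsub hod
        have h1 : ∑ i ∈ Nb j \ T, x i = x a := by
          refine Finset.sum_eq_single_of_mem a (Finset.mem_sdiff.mpr ⟨hab, haT⟩)
            fun i hi hne => ?_
          obtain ⟨hib, hiT⟩ := Finset.mem_sdiff.mp hi
          rcases hzero i hib hne with h | h
          · exact h
          · exact absurd (Finset.mem_filter.mpr ⟨hib, h⟩) hiT
        have h2 : ∑ i ∈ T, (1 - x i) = 0 := by
          refine Finset.sum_eq_zero fun i hi => ?_
          have := (Finset.mem_filter.mp hi).2
          linarith
        rw [h1, h2] at hc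
        linarith [haf.2]
    have hFne : i₀ ∈ F := by simp [hF, hi₀.1, hi₀.2]
    set N : Finset (Fin m) := F.biUnion Nv with hN
    -- double counting
    have hcount : ∑ j ∈ N, (Nb j ∩ F).card = dv * F.card := by
      have : ∀ j, (Nb j ∩ F).card = ∑ i ∈ F, if i ∈ Nb j then 1 else 0 := by
        intro j
        rw [Finset.inter_comm, ← Finset.filter_mem_eq_inter, Finset.card_filter]
      simp_rw [this]
      rw [Finset.sum_comm]
      have : ∀ i ∈ F, (∑ j ∈ N, if i ∈ Nb j then 1 else 0) = dv := by
        intro i hi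
        rw [← Finset.card_filter]
        have : N.filter (fun j => i ∈ Nb j) = Nv i := by
          ext j
          simp only [Finset.mem_filter, hN, Finset.mem_biUnion]
          constructor
          · rintro ⟨-, h⟩; exact (hadj i j).mpr h
          · intro h; exact ⟨⟨i, hi, h⟩, (hadj i j).mp h⟩
        rw [this, hdv]
      rw [Finset.sum_congr rfl this, Finset.sum_const, smul_eq_mul, mul_comm]
    have hlb : 2 * N.card ≤ ∑ j ∈ N, (Nb j ∩ F).card := by
      have h2le : ∀ j ∈ N, 2 ≤ (Nb j ∩ F).card := by
        intro j hj
        obtain ⟨i, hiF, hiN⟩ := Finset.mem_biUnion.mp hj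
        have h1 : 0 < (Nb j ∩ F).card :=
          Finset.card_pos.mpr ⟨i, Finset.mem_inter.mpr ⟨(hadj i j).mp hiN, hiF⟩⟩
        have h2 := hkey j
        omega
      calc 2 * N.card = N.card • 2 := by rw [smul_eq_mul, mul_comm]
        _ ≤ _ := Finset.card_nsmul_le_sum N _ 2 h2le
    have hedge : 2 * N.card ≤ dv * F.card := hcount ▸ hlb
    have hexpF := hexp F (le_of_lt hcon)
    have hc2 : (2 : ℝ) * N.card ≤ (dv : ℝ) * F.card := by exact_mod_cast hedge
    have hAB : (1 : ℝ) ≤ (dv : ℝ) * F.card := by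
      have hFpos : 1 ≤ F.card := Finset.card_pos.mpr ⟨i₀, hFne⟩
      have : 1 * 1 ≤ dv * F.card := Nat.mul_le_mul hdvpos hFpos
      exact_mod_cast this
    nlinarith [hexpF, hc2, hAB, hδ]
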